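/- Let F be a finite field with q elements, q odd. Then for every a ∈ F and every integer n ≥ 1, ∑_{f} λ(f)·η(f(a)) equals (q − 1)·q^{n/2 − 1} if n is even, and equals 0 if n is odd; here the sum runs over all monic polynomials f ∈ F[T] of degree n, η : F → ℤ is the quadratic character of F (η(0) = 0, η(x) = 1 if x is a nonzero square in F, η(x) = −1 otherwise), and f(a) denotes the evaluation of f at a. -/

import Mathlib

open Polynomial
open scoped Classical

/-- The Möbius function on `F[T]`: `(-1)^k` for a squarefree polynomial with `k`
irreducible factors, and `0` for non-squarefree polynomials. -/
noncomputable def polyMoebius {F : Type*} [Field F] (f : F[X]) : ℤ :=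
  if Squarefree f then (-1) ^ Multiset.card (UniqueFactorizationMonoid.factors f) else 0

/-- The Liouville function on `F[T]`: `(-1)^{Ω(f)}` where `Ω(f)` is the number of
irreducible factors of `f` counted with multiplicity. -/
noncomputable def polyLiouville {F : Type*} [Field F] (f : F[X]) : ℤ :=
  (-1) ^ Multiset.card (UniqueFactorizationMonoid.factors f)

/-- The sum of a weight `w` over all monic polynomials of degree `n` in `F[T]`. -/
noncomputable def coeffSum {F : Type*} [Field F] (w : F[X] → ℤ) (n : ℕ) : ℤ :=
  ∑ᶠ f ∈ {f : F[X] | f.Monic ∧ f.natDegree = n}, w f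

/-- `e_even`: the sum of the even-index elementary symmetric polynomials in
`cos θ_1, …, cos θ_d`, i.e. `½(∏(1 + cos θ_j) + ∏(1 − cos θ_j))`. -/
noncomputable def eEven {d : ℕ} (θ : Fin d → ℝ) : ℝ :=
  ((∏ j, (1 + Real.cos (θ j))) + ∏ j, (1 - Real.cos (θ j))) / 2

/-- `e_odd`: the sum of the odd-index elementary symmetric polynomials in
`cos θ_1, …, cos θ_d`, i.e. `½(∏(1 + cos θ_j) − ∏(1 − cos θ_j))`. -/
noncomputable def eOdd {d : ℕ} (θ : Fin d → ℝ) : ℝ :=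
  ((∏ j, (1 + Real.cos (θ j))) - ∏ j, (1 - Real.cos (θ j))) / 2

/-- The constant `C_m = ∏_{i=1}^r (1 − q^{−M_i}) / (2^{M'} ∏_{j=1}^{M'} sin² θ_j)`. -/
noncomputable def biasConst {d r : ℕ} (q : ℕ) (Mi : Fin r → ℕ) (θ : Fin d → ℝ) : ℝ :=
  (∏ i, (1 - (q : ℝ) ^ (-(Mi i : ℤ)))) / (2 ^ d * ∏ j, Real.sin (θ j) ^ 2)

/-- The quadratic character of a finite field `F`: `η(0) = 0`, `η(x) = 1` if `x` is a
nonzero square, and `η(x) = −1` otherwise. -/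
noncomputable def quadChar (F : Type*) [Field F] (x : F) : ℤ :=
  if x = 0 then 0 else if IsSquare x then 1 else -1

set_option linter.unusedSectionVars false
set_option maxHeartbeats 1000000

open Polynomial
open scoped Classical

section Aux

open Finset UniqueFactorizationMonoid

noncomputable def quadChar' (F : Type*) [Field F] (x : F) : ℤ :=
  if x = 0 then 0 else if IsSquare x then 1 else -1

variable {F : Type*} [Field F] [Fintype F]

lemma quadChar'_eq (x : F) : quadChar' F x = quadraticChar F x := by
  by_cases h0 : x = 0
  · simp [quadChar', h0]
  by_cases hs : IsSquare x <;>
    simp [quadChar', h0, hs, quadraticChar_apply, quadraticCharFun]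

lemma quadChar'_mul (x y : F) : quadChar' F (x * y) = quadChar' F x * quadChar' F y := by
  simp only [quadChar'_eq]; exact map_mul (quadraticChar F) x y

lemma quadChar'_sum (hq : Odd (Fintype.card F)) : ∑ x : F, quadChar' F x = 0 := by
  have hchar : ringChar F ≠ 2 := by
    intro h
    have := FiniteField.even_card_of_char_two h
    have := Nat.odd_iff.mp hq
    omega
  simp only [quadChar'_eq]
  exact_mod_cast quadraticChar_sum_zero hchar

lemma quadChar'_one : quadChar' F (1 : F) = 1 := by
  simp [quadChar', IsSquare.one]

lemma quadChar'_sq (x : F) : quadChar' F (x * x) = if x = 0 then 0 else 1 := by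
  by_cases h0 : x = 0
  · simp [quadChar', h0]
  · simp [quadChar', h0, mul_ne_zero h0 h0, (⟨x, rfl⟩ : IsSquare (x*x))]

end Aux

open Polynomial
open scoped Classical

section Mon

open Finset

variable {F : Type*} [Field F] [Fintype F]

/-- The standard monic polynomial with prescribed lower coefficients. -/
noncomputable def stdMon (j : ℕ) (c : Fin j → F) : F[X] :=
  X ^ j + ∑ i : Fin j, C (c i) * X ^ (i : ℕ)

lemma stdMon_coeff (j : ℕ) (c : Fin j → F) (k : ℕ) :
    (stdMon j c).coeff k = if k = j then 1 else if h : k < j then c ⟨k, h⟩ else 0 := by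
  rw [stdMon, coeff_add, coeff_X_pow, finset_sum_coeff]
  simp only [coeff_C_mul, coeff_X_pow, mul_ite, mul_one, mul_zero]
  by_cases hkj : k = j
  · subst hkj
    rw [if_pos rfl, if_pos rfl]
    rw [Finset.sum_eq_zero (fun i _ => by rw [if_neg (Ne.symm i.2.ne)]), add_zero]
  · rw [if_neg hkj, if_neg hkj, zero_add]
    by_cases hk : k < j
    · rw [dif_pos hk]
      have hiff : ∀ i : Fin j, (k = (i : ℕ)) ↔ i = ⟨k, hk⟩ := by
        intro i
        constructor
        · intro h; exact Fin.ext h.symm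
        · intro h; subst h; rfl
      calc (∑ i : Fin j, if k = (i : ℕ) then c i else 0)
          = ∑ i : Fin j, if i = ⟨k, hk⟩ then c i else 0 := by
            refine Finset.sum_congr rfl fun i _ => ?_
            rw [if_congr (hiff i) rfl rfl]
        _ = c ⟨k, hk⟩ := by rw [Finset.sum_ite_eq' Finset.univ]; simp
    · rw [dif_neg hk]
      refine Finset.sum_eq_zero fun i _ => ?_
      exact if_neg fun h => hk (lt_of_eq_of_lt h i.2)

lemma stdMon_monic (j : ℕ) (c : Fin j → F) :
    (stdMon j c).Monic ∧ (stdMon j c).natDegree = j := by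
  have hle : (stdMon j c).natDegree ≤ j := by
    apply natDegree_le_iff_coeff_eq_zero.mpr
    intro m hm
    rw [stdMon_coeff, if_neg (by omega), dif_neg (by omega)]
  have hcj : (stdMon j c).coeff j = 1 := by rw [stdMon_coeff, if_pos rfl]
  have hge : j ≤ (stdMon j c).natDegree :=
    le_natDegree_of_ne_zero (by rw [hcj]; exact one_ne_zero)
  have hdeg : (stdMon j c).natDegree = j := le_antisymm hle hge
  exact ⟨by rw [Monic, leadingCoeff, hdeg, hcj], hdeg⟩

lemma stdMon_injective (j : ℕ) : Function.Injective (stdMon (F := F) j) := by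
  intro c c' h
  funext i
  have := congrArg (fun p => Polynomial.coeff p (i : ℕ)) h
  simp only [stdMon_coeff] at this
  rw [if_neg i.2.ne, dif_pos i.2, if_neg i.2.ne, dif_pos i.2] at this
  simpa using this

/-- The finset of monic polynomials of degree `j`. -/
noncomputable def monPoly (F : Type*) [Field F] [Fintype F] (j : ℕ) : Finset F[X] :=
  Finset.image (stdMon j) Finset.univ

lemma mem_monPoly {j : ℕ} {f : F[X]} :
    f ∈ monPoly F j ↔ f.Monic ∧ f.natDegree = j := by
  constructor
  · rintro hf
    obtain ⟨c, _, rfl⟩ := Finset.mem_image.mp hf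
    exact stdMon_monic j c
  · rintro ⟨hm, hd⟩
    apply Finset.mem_image.mpr
    refine ⟨fun i => f.coeff (i : ℕ), Finset.mem_univ _, ?_⟩
    apply Polynomial.ext
    intro k
    rw [stdMon_coeff]
    by_cases hkj : k = j
    · subst hkj; rw [if_pos rfl]; rw [← hd] at *; exact hm.coeff_natDegree.symm
    · rw [if_neg hkj]
      by_cases hk : k < j
      · rw [dif_pos hk]
      · rw [dif_neg hk]
        exact (coeff_eq_zero_of_natDegree_lt (by omega)).symm

lemma sum_monPoly (j : ℕ) (w : F[X] → ℤ) :
    ∑ f ∈ monPoly F j, w f = ∑ c : Fin j → F, w (stdMon j c) :=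
  (Finset.sum_image (fun c _ c' _ h => stdMon_injective j h)).trans rfl

lemma stdMon_eval (j : ℕ) (c : Fin j → F) (a : F) :
    (stdMon j c).eval a = a ^ j + ∑ i : Fin j, c i * a ^ (i : ℕ) := by
  simp [stdMon, eval_finset_sum]

/-- Fiber lemma: for `j ≥ 1` the evaluation map is equidistributed. -/
lemma sum_monPoly_eval (a : F) {j : ℕ} (hj : 1 ≤ j) (w : F → ℤ) :
    ∑ f ∈ monPoly F j, w (f.eval a)
      = (Fintype.card F : ℤ) ^ (j - 1) * ∑ x : F, w x := by
  obtain ⟨k, rfl⟩ : ∃ k, j = k + 1 := ⟨j - 1, by omega⟩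
  rw [sum_monPoly]
  simp only [stdMon_eval]
  rw [← (Fin.consEquiv (fun _ : Fin (k+1) => F)).sum_comp
      (fun c => w (a ^ (k+1) + ∑ i : Fin (k+1), c i * a ^ (i : ℕ)))]
  rw [Fintype.sum_prod_type]
  have key : ∀ (x : F) (c' : Fin k → F),
      a ^ (k+1) + ∑ i : Fin (k+1), ((Fin.consEquiv (fun _ : Fin (k+1) => F)) (x, c')) i * a ^ (i : ℕ)
        = x + (a ^ (k+1) + ∑ i : Fin k, c' i * a ^ ((i : ℕ) + 1)) := by
    intro x c'
    rw [Fin.sum_univ_succ]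
    simp [Fin.consEquiv, Fin.cons_zero, Fin.cons_succ]
    ring
  calc (∑ x : F, ∑ c' : Fin k → F,
          w (a ^ (k+1) + ∑ i : Fin (k+1), ((Fin.consEquiv (fun _ : Fin (k+1) => F)) (x, c')) i * a ^ (i : ℕ)))
      = ∑ c' : Fin k → F, ∑ x : F,
          w (x + (a ^ (k+1) + ∑ i : Fin k, c' i * a ^ ((i : ℕ) + 1))) := by
        rw [Finset.sum_comm]
        apply Finset.sum_congr rfl; intro c' _
        apply Finset.sum_congr rfl; intro x _
        rw [key]
    _ = ∑ c' : Fin k → F, ∑ x : F, w x := by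
        apply Finset.sum_congr rfl; intro c' _
        exact Fintype.sum_equiv (Equiv.addRight (a ^ (k+1) + ∑ i : Fin k, c' i * a ^ ((i : ℕ) + 1))) _ w (fun x => rfl)
    _ = ((Fintype.card (Fin k → F) : ℕ) : ℤ) * ∑ x : F, w x := by
        simp only [Finset.sum_const, nsmul_eq_mul, Finset.card_univ]
    _ = (Fintype.card F : ℤ) ^ (k + 1 - 1) * ∑ x : F, w x := by
        norm_num [Fintype.card_fun]

lemma monPoly_zero : monPoly F 0 = {1} := by
  ext f
  rw [mem_monPoly, Finset.mem_singleton]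
  constructor
  · rintro ⟨hm, hd⟩
    exact Polynomial.eq_one_of_monic_natDegree_zero hm hd
  · rintro rfl; exact ⟨monic_one, natDegree_one⟩

end Mon

open Polynomial
open scoped Classical

section Mult

open Finset UniqueFactorizationMonoid

/-- Sum of `(-1)^|s|` over distinct submultisets of `t`. -/
lemma sum_powerset_neg_one_pow {α : Type*} [DecidableEq α] (t : Multiset α) :
    ∑ s ∈ t.powerset.toFinset, (-1 : ℤ) ^ Multiset.card s
      = if ∀ x, Even (t.count x) then 1 else 0 := by
  induction t using Multiset.strongInductionOn with
  | ih t IH =>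
  rcases Multiset.empty_or_exists_mem t with h0 | ⟨a, ha⟩
  · subst h0
    simp
  · set e := t.count a with he
    set t' := t.filter (· ≠ a) with ht'
    have hcount : ∀ b, t'.count b = if b = a then 0 else t.count b := by
      intro b
      rw [ht', Multiset.count_filter]
      split_ifs with h1 h2 h2 <;> simp_all
    have htlt : t' < t := by
      refine lt_of_le_of_ne (Multiset.filter_le _ _) (fun h => ?_)
      have := hcount a
      rw [h] at this
      simp only [if_pos rfl] at this
      exact absurd (this ▸ Multiset.count_pos.mpr ha) (lt_irrefl 0)
    have key : ∑ s ∈ t.powerset.toFinset, (-1 : ℤ) ^ Multiset.card s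
        = ∑ p ∈ (Finset.range (e + 1)) ×ˢ t'.powerset.toFinset,
            (-1 : ℤ) ^ (p.1 + Multiset.card p.2) := by
      refine Finset.sum_nbij' (fun s => (s.count a, s.filter (· ≠ a)))
        (fun p => Multiset.replicate p.1 a + p.2) ?_ ?_ ?_ ?_ ?_
      · intro s hs
        rw [Multiset.mem_toFinset, Multiset.mem_powerset] at hs
        rw [Finset.mem_product, Finset.mem_range, Multiset.mem_toFinset, Multiset.mem_powerset]
        exact ⟨Nat.lt_succ_of_le (Multiset.count_le_of_le a hs),
          Multiset.filter_le_filter _ hs⟩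
      · intro p hp
        rw [Finset.mem_product, Finset.mem_range, Multiset.mem_toFinset,
          Multiset.mem_powerset] at hp
        rw [Multiset.mem_toFinset, Multiset.mem_powerset]
        have h1 : Multiset.replicate p.1 a ≤ Multiset.replicate e a :=
          (Multiset.replicate_le_replicate a).mpr (Nat.lt_succ_iff.mp hp.1)
        have h2 : Multiset.replicate e a + t' ≤ t := by
          rw [Multiset.le_iff_count]
          intro b
          by_cases hb : b = a
          · subst hb
            simp [Multiset.count_add, Multiset.count_replicate, hcount b, he]
          · simp [Multiset.count_add, Multiset.count_replicate, hcount b, hb, Ne.symm hb]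
        exact le_trans (add_le_add h1 hp.2) h2
      · intro s hs
        rw [Multiset.mem_toFinset, Multiset.mem_powerset] at hs
        ext b
        by_cases hb : b = a
        · subst hb; simp [Multiset.count_add, Multiset.count_replicate, Multiset.count_filter]
        · simp [Multiset.count_add, Multiset.count_replicate, Multiset.count_filter, hb, Ne.symm hb]
      · intro p hp
        rw [Finset.mem_product, Finset.mem_range, Multiset.mem_toFinset,
          Multiset.mem_powerset] at hp
        have hnotmem : p.2.count a = 0 := by
          have := Multiset.count_le_of_le a hp.2
          rw [hcount a, if_pos rfl] at this
          omega
        have c1 : (Multiset.replicate p.1 a + p.2).count a = p.1 := by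
          rw [Multiset.count_add, Multiset.count_replicate, if_pos rfl, hnotmem]
          omega
        have c2 : (Multiset.replicate p.1 a + p.2).filter (· ≠ a) = p.2 := by
          ext b
          have hble := Multiset.count_le_of_le b hp.2
          rw [hcount b] at hble
          by_cases hb : b = a
          · subst hb
            rw [if_pos rfl] at hble
            simp [Multiset.count_filter, Multiset.count_add, Multiset.count_replicate]
            omega
          · simp [Multiset.count_filter, Multiset.count_add, Multiset.count_replicate, hb, Ne.symm hb]
        rw [c1, c2]
      · intro s hs
        rw [Multiset.mem_toFinset, Multiset.mem_powerset] at hs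
        congr 1
        have : s = Multiset.replicate (s.count a) a + s.filter (· ≠ a) := by
          ext b
          by_cases hb : b = a
          · subst hb; simp [Multiset.count_add, Multiset.count_replicate, Multiset.count_filter]
          · simp [Multiset.count_add, Multiset.count_replicate, Multiset.count_filter, hb, Ne.symm hb]
        conv_lhs => rw [this]
        rw [Multiset.card_add, Multiset.card_replicate]
    rw [key, Finset.sum_product]
    have inner : ∀ k : ℕ, ∑ s ∈ t'.powerset.toFinset, (-1 : ℤ) ^ (k + Multiset.card s)
        = (-1 : ℤ) ^ k * ∑ s ∈ t'.powerset.toFinset, (-1 : ℤ) ^ (Multiset.card s) := by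
      intro k
      rw [Finset.mul_sum]
      exact Finset.sum_congr rfl fun s _ => by rw [pow_add]
    calc (∑ k ∈ Finset.range (e + 1), ∑ s ∈ t'.powerset.toFinset,
            (-1 : ℤ) ^ (k + Multiset.card s))
        = (∑ k ∈ Finset.range (e + 1), (-1 : ℤ) ^ k) *
            ∑ s ∈ t'.powerset.toFinset, (-1 : ℤ) ^ (Multiset.card s) := by
          rw [Finset.sum_mul]
          exact Finset.sum_congr rfl fun k _ => inner k
      _ = (if Even e then 1 else 0) * (if ∀ x, Even (t'.count x) then 1 else 0) := by
          rw [IH t' htlt, neg_one_geom_sum]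
          congr 1
          rcases Nat.even_or_odd e with h | h
          · rw [if_pos h, if_neg (by simp [Nat.even_add_one, h])]
          · have h' : ¬ Even e := Nat.not_even_iff_odd.mpr h
            rw [if_neg h', if_pos (Nat.even_add_one.mpr h')]
      _ = if ∀ x, Even (t.count x) then 1 else 0 := by
          by_cases h1 : Even e
          · by_cases h2 : ∀ x, Even (t'.count x)
            · rw [if_pos h1, if_pos h2, if_pos, one_mul]
              intro x
              rcases eq_or_ne x a with rfl | hx
              · exact he ▸ h1
              · have := h2 x
                rw [hcount x, if_neg hx] at this
                exact this
            · rw [if_pos h1, if_neg h2, mul_zero, if_neg]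
              intro hall
              exact h2 fun x => by
                rw [hcount x]
                split_ifs with hx
                · exact Even.zero
                · exact hall x
          · rw [if_neg h1, zero_mul, if_neg]
            intro hall
            exact h1 (he ▸ hall a)

open Polynomial
open scoped Classical

noncomputable def polyLiouville' {F : Type*} [Field F] (f : F[X]) : ℤ :=
  (-1) ^ Multiset.card (UniqueFactorizationMonoid.factors f)

section Fact

open Finset UniqueFactorizationMonoid

variable {F : Type*} [Field F]

lemma monic_of_mem_nf {f p : F[X]} (hp : p ∈ normalizedFactors f) : p.Monic := by
  have h1 : normalize p = p := normalize_normalized_factor p hp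
  have h0 : p ≠ 0 := fun h => zero_notMem_normalizedFactors f (h ▸ hp)
  have : p.leadingCoeff ≠ 0 := leadingCoeff_ne_zero.mpr h0
  rw [Monic, ← h1, Polynomial.leadingCoeff_normalize]
  exact normalize_eq_one.mpr (Ne.isUnit this)

lemma monic_multiset_prod {s : Multiset F[X]} (hs : ∀ p ∈ s, Monic p) : s.prod.Monic := by
  have := Polynomial.monic_multiset_prod_of_monic s id hs
  rwa [Multiset.map_id] at this

lemma monic_prod_nf {f : F[X]} (hf : f.Monic) : (normalizedFactors f).prod = f :=
  Polynomial.eq_of_monic_of_associated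
    (monic_multiset_prod fun p hp => monic_of_mem_nf hp) hf
    (prod_normalizedFactors hf.ne_zero)

lemma polyLiouville'_eq_nf {f : F[X]} :
    polyLiouville' f = (-1 : ℤ) ^ Multiset.card (normalizedFactors f) := by
  rw [polyLiouville', normalizedFactors, Multiset.card_map]

/-- Even multiplicities iff `f` is a monic square. -/
lemma evenCounts_iff_square {f : F[X]} (hf : f.Monic) :
    (∀ p, Even ((normalizedFactors f).count p)) ↔ ∃ h : F[X], h.Monic ∧ h * h = f := by
  constructor
  · intro hev
    set t := normalizedFactors f with ht
    set s : Multiset F[X] := ∑ b ∈ t.toFinset, Multiset.replicate (t.count b / 2) b with hs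
    have hcnt : ∀ b, s.count b = t.count b / 2 := by
      intro b
      rw [hs, Multiset.count_sum']
      by_cases hb : b ∈ t.toFinset
      · rw [Finset.sum_eq_single b
          (fun c _ hc => by simp [Multiset.count_replicate, hc, Ne.symm hc])
          (fun h => absurd hb h)]
        simp [Multiset.count_replicate]
      · rw [Finset.sum_eq_zero, eq_comm]
        · have : t.count b = 0 := by
            rw [Multiset.count_eq_zero]
            exact fun h => hb (Multiset.mem_toFinset.mpr h)
          omega
        · intro c hc
          have hbc : b ≠ c := fun h => hb (h ▸ hc)
          simp [Multiset.count_replicate, hbc, Ne.symm hbc]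
    have hss : s + s = t := by
      ext b
      rw [Multiset.count_add, hcnt b]
      rcases hev b with ⟨k, hk⟩
      omega
    have hsmem : ∀ p ∈ s, Monic p := by
      intro p hp
      have : p ∈ t := by
        rw [← hss]
        exact Multiset.mem_add.mpr (Or.inl hp)
      exact monic_of_mem_nf this
    refine ⟨s.prod, monic_multiset_prod hsmem, ?_⟩
    rw [← Multiset.prod_add, hss, ht, monic_prod_nf hf]
  · rintro ⟨h, hm, rfl⟩
    intro p
    rw [normalizedFactors_mul hm.ne_zero hm.ne_zero, Multiset.count_add]
    exact ⟨_, rfl⟩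

end Fact

section Conv

open Finset UniqueFactorizationMonoid

variable {F : Type*} [Field F] [Fintype F]

/-- The set of pairs of monic polynomials with degrees summing to `n`. -/
noncomputable def pairSet (F : Type*) [Field F] [Fintype F] (n : ℕ) : Finset (F[X] × F[X]) :=
  (antidiagonal n).biUnion (fun p => monPoly F p.1 ×ˢ monPoly F p.2)

lemma mem_pairSet {n : ℕ} {z : F[X] × F[X]} :
    z ∈ pairSet F n ↔ z.1.Monic ∧ z.2.Monic ∧ z.1.natDegree + z.2.natDegree = n := by
  rw [pairSet, Finset.mem_biUnion]
  constructor
  · rintro ⟨p, hp, hz⟩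
    rw [Finset.mem_product, mem_monPoly, mem_monPoly] at hz
    rw [Finset.HasAntidiagonal.mem_antidiagonal] at hp
    exact ⟨hz.1.1, hz.2.1, by rw [hz.1.2, hz.2.2]; exact hp⟩
  · rintro ⟨h1, h2, h3⟩
    exact ⟨(z.1.natDegree, z.2.natDegree), Finset.HasAntidiagonal.mem_antidiagonal.mpr h3,
      Finset.mem_product.mpr ⟨mem_monPoly.mpr ⟨h1, rfl⟩, mem_monPoly.mpr ⟨h2, rfl⟩⟩⟩

/-- The set of pairs `(f, s)` with `f` monic of degree `n` and `s` a submultiset of its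
normalized factors. -/
noncomputable def subSet (F : Type*) [Field F] [Fintype F] (n : ℕ) : Finset (F[X] × Multiset F[X]) :=
  (monPoly F n).biUnion (fun f => ((normalizedFactors f).powerset.toFinset).image (Prod.mk f))

lemma mem_subSet {n : ℕ} {y : F[X] × Multiset F[X]} :
    y ∈ subSet F n ↔ (y.1.Monic ∧ y.1.natDegree = n) ∧ y.2 ≤ normalizedFactors y.1 := by
  rw [subSet, Finset.mem_biUnion]
  constructor
  · rintro ⟨f, hf, hy⟩
    rw [Finset.mem_image] at hy
    obtain ⟨s, hs, rfl⟩ := hy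
    rw [Multiset.mem_toFinset, Multiset.mem_powerset] at hs
    exact ⟨mem_monPoly.mp hf, hs⟩
  · rintro ⟨h1, h2⟩
    exact ⟨y.1, mem_monPoly.mpr h1, Finset.mem_image.mpr
      ⟨y.2, Multiset.mem_toFinset.mpr (Multiset.mem_powerset.mpr h2), rfl⟩⟩

lemma conv_eq (a : F) (n : ℕ) :
    ∑ p ∈ antidiagonal n,
        (∑ d ∈ monPoly F p.1, polyLiouville' d * quadChar' F (d.eval a)) *
          (∑ e ∈ monPoly F p.2, quadChar' F (e.eval a))
      = ∑ f ∈ monPoly F n, quadChar' F (f.eval a) *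
          ∑ s ∈ (normalizedFactors f).powerset.toFinset, (-1 : ℤ) ^ Multiset.card s := by
  have lhs_eq : ∑ p ∈ antidiagonal n,
        (∑ d ∈ monPoly F p.1, polyLiouville' d * quadChar' F (d.eval a)) *
          (∑ e ∈ monPoly F p.2, quadChar' F (e.eval a))
      = ∑ z ∈ pairSet F n, polyLiouville' z.1 * quadChar' F (z.1.eval a)
          * quadChar' F (z.2.eval a) := by
    rw [pairSet, Finset.sum_biUnion]
    · refine Finset.sum_congr rfl fun p _ => ?_
      rw [Finset.sum_mul_sum, Finset.sum_product]
    · intro p hp q hq hpq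
      simp only [Finset.disjoint_left]
      intro z hz hz'
      rw [Finset.mem_product, mem_monPoly, mem_monPoly] at hz hz'
      apply hpq
      have e1 : p = (z.1.natDegree, z.2.natDegree) := Prod.ext hz.1.2.symm hz.2.2.symm
      have e2 : q = (z.1.natDegree, z.2.natDegree) := Prod.ext hz'.1.2.symm hz'.2.2.symm
      rw [e1, e2]
  have rhs_eq : ∑ f ∈ monPoly F n, quadChar' F (f.eval a) *
          ∑ s ∈ (normalizedFactors f).powerset.toFinset, (-1 : ℤ) ^ Multiset.card s
      = ∑ y ∈ subSet F n, quadChar' F (y.1.eval a) * (-1 : ℤ) ^ Multiset.card y.2 := by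
    rw [subSet, Finset.sum_biUnion]
    · refine Finset.sum_congr rfl fun f _ => ?_
      rw [Finset.mul_sum, Finset.sum_image (fun s _ s' _ h => (Prod.mk.injEq _ _ _ _).mp h |>.2)]
    · intro f hf g hg hfg
      simp only [Finset.disjoint_left]
      intro y hy hy'
      rw [Finset.mem_image] at hy hy'
      obtain ⟨s, _, rfl⟩ := hy
      obtain ⟨s', _, h⟩ := hy'
      exact hfg (((Prod.mk.injEq _ _ _ _).mp h).1.symm)
  rw [lhs_eq, rhs_eq]
  refine Finset.sum_nbij' (fun z => (z.1 * z.2, normalizedFactors z.1))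
    (fun y => (y.2.prod, y.1 / y.2.prod)) ?_ ?_ ?_ ?_ ?_
  · intro z hz
    rw [mem_pairSet] at hz
    obtain ⟨h1, h2, h3⟩ := hz
    rw [mem_subSet]
    refine ⟨⟨h1.mul h2, by rw [h1.natDegree_mul h2]; exact h3⟩, ?_⟩
    exact (dvd_iff_normalizedFactors_le_normalizedFactors h1.ne_zero
      (h1.mul h2).ne_zero).mp ⟨z.2, rfl⟩
  · intro y hy
    rw [mem_subSet] at hy
    obtain ⟨⟨h1, h2⟩, hs⟩ := hy
    have hmon : ∀ p ∈ y.2, Monic p := fun p hp => monic_of_mem_nf (Multiset.mem_of_le hs hp)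
    have hdm : (y.2.prod).Monic := monic_multiset_prod hmon
    have hdvd : y.2.prod ∣ y.1 := by
      have := Multiset.prod_dvd_prod_of_le hs
      rwa [monic_prod_nf h1] at this
    have hmul : y.2.prod * (y.1 / y.2.prod) = y.1 :=
      EuclideanDomain.mul_div_cancel' hdm.ne_zero hdvd
    have hem : (y.1 / y.2.prod).Monic := hdm.of_mul_monic_left (by rwa [hmul])
    rw [mem_pairSet]
    exact ⟨hdm, hem, by show y.2.prod.natDegree + (y.1 / y.2.prod).natDegree = n; rw [← hdm.natDegree_mul hem, hmul, h2]⟩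
  · intro z hz
    rw [mem_pairSet] at hz
    obtain ⟨h1, h2, _⟩ := hz
    have hd : (normalizedFactors z.1).prod = z.1 := monic_prod_nf h1
    have : z.1 * z.2 / (normalizedFactors z.1).prod = z.2 := by
      rw [hd]
      exact mul_div_cancel_left₀ z.2 h1.ne_zero
    rw [Prod.ext_iff]
    exact ⟨hd, this⟩
  · intro y hy
    rw [mem_subSet] at hy
    obtain ⟨⟨h1, _⟩, hs⟩ := hy
    have hmon : ∀ p ∈ y.2, Monic p := fun p hp => monic_of_mem_nf (Multiset.mem_of_le hs hp)
    have hdm : (y.2.prod).Monic := monic_multiset_prod hmon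
    have hdvd : y.2.prod ∣ y.1 := by
      have := Multiset.prod_dvd_prod_of_le hs
      rwa [monic_prod_nf h1] at this
    have hmul : y.2.prod * (y.1 / y.2.prod) = y.1 :=
      EuclideanDomain.mul_div_cancel' hdm.ne_zero hdvd
    have hnf : normalizedFactors (y.2.prod) = y.2 := by
      have hirr : ∀ p ∈ y.2, Irreducible p := fun p hp =>
        irreducible_of_normalized_factor p (Multiset.mem_of_le hs hp)
      rw [normalizedFactors_prod_eq _ hirr]
      have : Multiset.map normalize y.2 = Multiset.map id y.2 :=
        Multiset.map_congr rfl fun p hp =>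
          normalize_normalized_factor p (Multiset.mem_of_le hs hp)
      rw [this, Multiset.map_id]
    rw [Prod.ext_iff]
    exact ⟨hmul, hnf⟩
  · intro z hz
    rw [mem_pairSet] at hz
    obtain ⟨h1, h2, _⟩ := hz
    rw [polyLiouville'_eq_nf, eval_mul, quadChar'_mul]
    ring
  done

end Conv

section Final

open Finset UniqueFactorizationMonoid

variable {F : Type*} [Field F] [Fintype F]

lemma T_eq (hq : Odd (Fintype.card F)) (a : F) (j : ℕ) :
    ∑ e ∈ monPoly F j, quadChar' F (e.eval a) = if j = 0 then 1 else 0 := by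
  rcases Nat.eq_zero_or_pos j with rfl | hj
  · rw [if_pos rfl, monPoly_zero, Finset.sum_singleton, eval_one, quadChar'_one]
  · rw [if_neg (by omega), sum_monPoly_eval a hj, quadChar'_sum hq, mul_zero]

lemma sum_w_ne_zero : ∑ x : F, (if x = 0 then 0 else 1 : ℤ) = (Fintype.card F : ℤ) - 1 := by
  have : ∀ x : F, (if x = 0 then 0 else 1 : ℤ) = 1 - (if x = 0 then 1 else 0) := by
    intro x; split_ifs <;> ring
  rw [Finset.sum_congr rfl (fun x _ => this x), Finset.sum_sub_distrib,
    Finset.sum_const, Finset.sum_ite_eq' Finset.univ (0 : F) (fun _ => (1 : ℤ))]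
  simp [Finset.card_univ]

lemma filter_squares_even (hchar : ringChar F ≠ 2) (m : ℕ) :
    (monPoly F (2*m)).filter (fun f => ∃ h : F[X], h.Monic ∧ h * h = f)
      = (monPoly F m).image (fun h => h * h) := by
  ext f
  rw [Finset.mem_filter, Finset.mem_image]
  constructor
  · rintro ⟨hf, h, hh, rfl⟩
    rw [mem_monPoly] at hf
    refine ⟨h, mem_monPoly.mpr ⟨hh, ?_⟩, rfl⟩
    have := hf.2
    rw [hh.natDegree_mul hh] at this
    omega
  · rintro ⟨h, hh, rfl⟩
    rw [mem_monPoly] at hh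
    refine ⟨mem_monPoly.mpr ⟨hh.1.mul hh.1, ?_⟩, h, hh.1, rfl⟩
    rw [hh.1.natDegree_mul hh.1]
    omega

lemma sq_inj_on_monic (hchar : ringChar F ≠ 2) {h g : F[X]} (hh : h.Monic) (hg : g.Monic)
    (he : h * h = g * g) : h = g := by
  rcases mul_self_eq_mul_self_iff.mp he with h1 | h1
  · exact h1
  · exfalso
    have h2 := hh.leadingCoeff
    rw [h1, leadingCoeff_neg, hg.leadingCoeff] at h2
    exact Ring.neg_one_ne_one_of_char_ne_two hchar h2

lemma main_count (hq : Odd (Fintype.card F)) (a : F) (n : ℕ) (hn : 1 ≤ n) :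
    ∑ f ∈ monPoly F n, polyLiouville' f * quadChar' F (f.eval a)
      = if Even n then ((Fintype.card F : ℤ) - 1) * (Fintype.card F : ℤ) ^ (n / 2 - 1)
        else 0 := by
  have hchar : ringChar F ≠ 2 := by
    intro h
    have := FiniteField.even_card_of_char_two h
    have := Nat.odd_iff.mp hq
    omega
  have key := conv_eq a n
  -- collapse LHS of key
  have lhs : ∑ p ∈ antidiagonal n,
      (∑ d ∈ monPoly F p.1, polyLiouville' d * quadChar' F (d.eval a)) *
        (∑ e ∈ monPoly F p.2, quadChar' F (e.eval a))
      = ∑ f ∈ monPoly F n, polyLiouville' f * quadChar' F (f.eval a) := by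
    rw [Finset.sum_eq_single (n, 0)]
    · rw [T_eq hq a 0, if_pos rfl, mul_one]
    · intro p hp hne
      rw [Finset.HasAntidiagonal.mem_antidiagonal] at hp
      have : p.2 ≠ 0 := by
        intro h0
        apply hne
        have : p.1 = n := by omega
        exact Prod.ext this h0
      rw [T_eq hq a p.2, if_neg this, mul_zero]
    · intro h
      exact absurd (Finset.HasAntidiagonal.mem_antidiagonal.mpr (by omega)) h
  -- compute RHS of key
  have rhs : ∑ f ∈ monPoly F n, quadChar' F (f.eval a) *
        ∑ s ∈ (normalizedFactors f).powerset.toFinset, (-1 : ℤ) ^ Multiset.card s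
      = ∑ f ∈ (monPoly F n).filter (fun f => ∃ h : F[X], h.Monic ∧ h * h = f),
          quadChar' F (f.eval a) := by
    rw [Finset.sum_filter]
    refine Finset.sum_congr rfl fun f hf => ?_
    have hfm : f.Monic := (mem_monPoly.mp hf).1
    rw [sum_powerset_neg_one_pow, if_congr (evenCounts_iff_square hfm) rfl rfl]
    split_ifs <;> ring
  rw [lhs, rhs] at key
  rw [key]
  by_cases hev : Even n
  · obtain ⟨m, hm⟩ := hev
    have hm2 : n = 2 * m := by omega
    have hm1 : 1 ≤ m := by omega
    subst hm2
    rw [if_pos (by exact ⟨m, by omega⟩), filter_squares_even hchar m,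
      Finset.sum_image (fun h hh g hg he =>
        sq_inj_on_monic hchar (mem_monPoly.mp hh).1 (mem_monPoly.mp hg).1 he)]
    have : ∀ h : F[X], quadChar' F ((h * h).eval a) = (if h.eval a = 0 then 0 else 1 : ℤ) := by
      intro h; rw [eval_mul, quadChar'_sq]
    rw [Finset.sum_congr rfl (fun h _ => this h),
      sum_monPoly_eval a hm1 (fun x => if x = 0 then 0 else 1), sum_w_ne_zero]
    have : 2 * m / 2 - 1 = m - 1 := by omega
    rw [this, mul_comm]
  · rw [if_neg hev]
    have : (monPoly F n).filter (fun f => ∃ h : F[X], h.Monic ∧ h * h = f) = ∅ := by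
      rw [Finset.filter_eq_empty_iff]
      rintro f hf ⟨h, hh, rfl⟩
      apply hev
      rw [← (mem_monPoly.mp hf).2, hh.natDegree_mul hh]
      exact ⟨h.natDegree, by omega⟩
    rw [this, Finset.sum_empty]

end Final

/-- For `q` odd, `a ∈ F` and `n ≥ 1`, the λ-bias for the quadratic
character modulo the linear polynomial `T − a` equals `(q − 1)·q^{n/2 − 1}` for even `n`
and `0` for odd `n`. -/
theorem lambdaBias_degree_one_modulus {F : Type*} [Field F] [Fintype F]
    (hq : Odd (Fintype.card F)) (a : F) (n : ℕ) (hn : 1 ≤ n) :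
    ∑ᶠ f ∈ {f : Polynomial F | f.Monic ∧ f.natDegree = n},
      polyLiouville f * quadChar F (f.eval a) =
      if Even n then ((Fintype.card F : ℤ) - 1) * (Fintype.card F : ℤ) ^ (n / 2 - 1)
      else 0 := by
  have hset : {f : Polynomial F | f.Monic ∧ f.natDegree = n} = ↑(monPoly F n) := by
    ext f
    simp [mem_monPoly]
  rw [hset, finsum_mem_coe_finset]
  have hpt : ∀ f : Polynomial F,
      polyLiouville f * quadChar F (f.eval a) = polyLiouville' f * quadChar' F (f.eval a) :=
    fun f => rfl
  rw [Finset.sum_congr rfl (fun f _ => hpt f)]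
  exact main_count hq a n hn
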